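/- Let χ be a primitive Dirichlet character modulo q > 1. Then for every real x, |Σ_{1 ≤ n ≤ x} χ(n)| ≤ √q · log q (Pólya–Vinogradov inequality). -/

import Mathlib

open Finset Complex ZMod Real

section PVaux



-- Key inequality: (1-t) e^{2t} ≤ 1+t for t ∈ [0,1)
lemma PV.key_ineq {t : ℝ} (ht0 : 0 ≤ t) : (1 - t) * Real.exp (2 * t) ≤ 1 + t := by
  have h : ∀ s : ℝ, HasDerivAt (fun u : ℝ => (1 + u) * Real.exp (-u) - (1 - u) * Real.exp u)
      (s * (Real.exp s - Real.exp (-s))) s := by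
    intro s
    have h1 : HasDerivAt (fun u : ℝ => (1 + u) * Real.exp (-u))
        (1 * Real.exp (-s) + (1 + s) * (Real.exp (-s) * (-1))) s := by
      have := ((hasDerivAt_id s).const_add 1).mul ((Real.hasDerivAt_exp (-s)).comp s
        ((hasDerivAt_id s).neg))
      exact this
    have h2 : HasDerivAt (fun u : ℝ => (1 - u) * Real.exp u)
        ((-1) * Real.exp s + (1 - s) * Real.exp s) s := by
      have := ((hasDerivAt_id s).neg.const_add 1).mul (Real.hasDerivAt_exp s)
      exact this
    have := h1.sub h2
    exact this.congr_deriv (by ring)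
  have hmono : MonotoneOn (fun u : ℝ => (1 + u) * Real.exp (-u) - (1 - u) * Real.exp u)
      (Set.Ici 0) := by
    refine monotoneOn_of_deriv_nonneg (convex_Ici 0) ?_ ?_ ?_
    · exact (Continuous.sub (by continuity) (by continuity)).continuousOn
    · intro s hs
      exact (h s).differentiableAt.differentiableWithinAt
    · intro s hs
      rw [interior_Ici, Set.mem_Ioi] at hs
      rw [(h s).deriv]
      have : Real.exp (-s) ≤ Real.exp s := Real.exp_le_exp.2 (by linarith [le_of_lt hs])
      nlinarith [le_of_lt hs]
  have h0 : (0:ℝ) ≤ (1 + t) * Real.exp (-t) - (1 - t) * Real.exp t := by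
    have := hmono (Set.self_mem_Ici) (Set.mem_Ici.2 ht0) ht0
    simpa using this
  have hpos := Real.exp_pos t
  have key : (1 - t) * Real.exp t ≤ (1 + t) * Real.exp (-t) := by linarith
  have := mul_le_mul_of_nonneg_right key hpos.le
  calc (1 - t) * Real.exp (2 * t) = (1 - t) * Real.exp t * Real.exp t := by
        rw [mul_assoc, ← Real.exp_add]; ring_nf
    _ ≤ (1 + t) * Real.exp (-t) * Real.exp t := this
    _ = 1 + t := by rw [mul_assoc, ← Real.exp_add]; simp

lemma PV.log_ineq {t : ℝ} (ht0 : 0 ≤ t) (ht1 : t < 1) :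
    2 * t ≤ Real.log ((1 + t) / (1 - t)) := by
  have h1 : (0:ℝ) < 1 - t := by linarith
  have h2 : (0:ℝ) < 1 + t := by linarith
  have := PV.key_ineq ht0
  have hle : Real.exp (2 * t) ≤ (1 + t) / (1 - t) := by
    rw [le_div_iff₀ h1]; linarith [this]
  calc 2 * t = Real.log (Real.exp (2 * t)) := (Real.log_exp _).symm
    _ ≤ _ := Real.log_le_log (Real.exp_pos _) hle


-- H_m ≤ log (2m+1)
lemma PV.harm_le (m : ℕ) : ∑ k ∈ Finset.Icc 1 m, (1:ℝ) / k ≤ Real.log (2 * m + 1) := by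
  induction m with
  | zero => simp
  | succ m ih =>
    rw [Finset.sum_Icc_succ_top (by omega)]
    have key : (1:ℝ) / (m + 1) ≤ Real.log (2 * (m+1) + 1) - Real.log (2 * m + 1) := by
      have ht0 : (0:ℝ) ≤ 1 / (2 * (m:ℝ) + 2) := by positivity
      have hm0 : (0:ℝ) ≤ (m:ℝ) := Nat.cast_nonneg m
      have ht1 : (1:ℝ) / (2 * (m:ℝ) + 2) < 1 := by
        rw [div_lt_one (by linarith)]; linarith
      have := PV.log_ineq ht0 ht1
      have e1 : (1 + 1 / (2 * (m:ℝ) + 2)) / (1 - 1 / (2 * (m:ℝ) + 2))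
          = (2 * ((m:ℝ)+1) + 1) / (2 * m + 1) := by
        rw [div_eq_div_iff (ne_of_gt (by linarith)) (ne_of_gt (by positivity))]
        field_simp
        ring
      rw [e1] at this
      have e2 : Real.log ((2 * ((m:ℝ)+1) + 1) / (2 * m + 1))
          = Real.log (2 * ((m:ℝ)+1) + 1) - Real.log (2 * m + 1) :=
        Real.log_div (by positivity) (by positivity)
      rw [e2] at this
      have e3 : 2 * (1 / (2 * (m:ℝ) + 2)) = 1 / ((m:ℝ) + 1) := by
        field_simp
      linarith [this, e3.symm.le]
    push_cast
    push_cast at ih key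
    linarith

-- main harmonic-type bound
lemma PV.sum_min_le {q : ℕ} (hq : 2 ≤ q) :
    ∑ b ∈ Finset.Ioo 0 q, (1:ℝ) / (min b (q - b) : ℕ) ≤ 2 * Real.log q := by
  set m := q / 2 with hm
  have hm1 : 1 ≤ m := by omega
  have hmq : m ≤ q - 1 := by omega
  have hsplit : Finset.Ioo 0 q = Finset.Icc 1 m ∪ Finset.Ioc m (q-1) := by
    ext b; simp [Finset.mem_Ioo, Finset.mem_Icc, Finset.mem_Ioc]; omega
  have hdisj : Disjoint (Finset.Icc 1 m) (Finset.Ioc m (q-1)) := by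
    rw [Finset.disjoint_left]; intro b hb hb'
    simp [Finset.mem_Icc] at hb; simp [Finset.mem_Ioc] at hb'; omega
  rw [hsplit, Finset.sum_union hdisj]
  have h1 : ∑ b ∈ Finset.Icc 1 m, (1:ℝ) / (min b (q - b) : ℕ)
      = ∑ b ∈ Finset.Icc 1 m, (1:ℝ) / b := by
    refine Finset.sum_congr rfl fun b hb => ?_
    simp only [Finset.mem_Icc] at hb
    have : min b (q - b) = b := by omega
    rw [this]
  have h2 : ∑ b ∈ Finset.Ioc m (q-1), (1:ℝ) / (min b (q - b) : ℕ)
      = ∑ b ∈ Finset.Icc 1 (q - m - 1), (1:ℝ) / b := by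
    refine Finset.sum_nbij' (fun b => q - b) (fun b => q - b) ?_ ?_ ?_ ?_ ?_
    · intro b hb; simp only [Finset.mem_Ioc] at hb; simp only [Finset.mem_Icc]; omega
    · intro b hb; simp only [Finset.mem_Icc] at hb; simp only [Finset.mem_Ioc]; omega
    · intro b hb; simp only [Finset.mem_Ioc] at hb; show q - (q - b) = b; omega
    · intro b hb; simp only [Finset.mem_Icc] at hb; show q - (q - b) = b; omega
    · intro b hb; simp only [Finset.mem_Ioc] at hb
      have : min b (q - b) = q - b := by omega
      rw [this]
  rw [h1, h2]
  rcases Nat.even_or_odd q with ⟨c, hc⟩ | ⟨c, hc⟩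
  · -- q = 2c, m = c, q - m - 1 = c - 1
    have hmc : m = c := by omega
    have hc1 : 1 ≤ c := by omega
    have hqm : q - m - 1 = c - 1 := by omega
    rw [hqm, hmc]
    have hHm := PV.harm_le c
    have hstep : ∑ b ∈ Finset.Icc 1 (c-1), (1:ℝ)/b = (∑ b ∈ Finset.Icc 1 c, (1:ℝ)/b) - 1/c := by
      have : Finset.Icc 1 c = Finset.Icc 1 (c-1) ∪ {c} := by
        ext b; simp [Finset.mem_Icc]; omega
      rw [this, Finset.sum_union (by simp [Finset.disjoint_left]; omega)]
      simp
    rw [hstep]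
    -- need 2 H_c - 1/c ≤ 2 log (2c)
    have hlog : Real.log (2*(c:ℝ)+1) - Real.log (2*c) ≤ 1/(2*(c:ℝ)) := by
      have h2c : (0:ℝ) < 2*c := by positivity
      have := Real.log_le_sub_one_of_pos (x := (2*(c:ℝ)+1)/(2*c)) (by positivity)
      rw [Real.log_div (by positivity) (by positivity)] at this
      have e : (2*(c:ℝ)+1)/(2*c) - 1 = 1/(2*c) := by field_simp; ring
      linarith
    have hq' : (q:ℝ) = 2*c := by push_cast [hc]; ring
    rw [hq']
    have hc' : (0:ℝ) < c := by positivity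
    have e4 : (1:ℝ)/c = 2 * (1/(2*(c:ℝ))) := by field_simp
    linarith [hHm]
  · -- q = 2c+1, m = c, q - m - 1 = c
    have hmc : m = c := by omega
    have hqm : q - m - 1 = c := by omega
    rw [hqm, hmc]
    have hHm := PV.harm_le c
    have hq' : (q:ℝ) = 2*c+1 := by push_cast [hc]; ring
    rw [hq']
    linarith


-- |sum_{n in Icc 1 N} z^n| ≤ 2/|z-1|
lemma PV.geom_bound (N : ℕ) {z : ℂ} (hz : z ≠ 1) (h1 : ‖z‖ = 1) :
    ‖∑ n ∈ Finset.Icc 1 N, z ^ n‖ ≤ 2 / ‖z - 1‖ := by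
  have hne : z - 1 ≠ 0 := sub_ne_zero.2 hz
  have habs : 0 < ‖z - 1‖ := by
    simpa [norm_pos_iff] using hne
  have e0 : Finset.range (N+1) = insert 0 (Finset.Icc 1 N) := by
    ext n; simp [Finset.mem_range, Finset.mem_Icc]; omega
  have e1 : ∑ n ∈ Finset.Icc 1 N, z ^ n = (z ^ (N+1) - 1) / (z - 1) - 1 := by
    rw [← geom_sum_eq hz (N+1), e0, Finset.sum_insert (by simp)]
    simp
  rw [e1]
  have e2 : (z ^ (N+1) - 1) / (z - 1) - 1 = (z ^ (N+1) - z) / (z - 1) := by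
    field_simp
    ring
  rw [e2, norm_div]
  have h2 : ‖z ^ (N+1) - z‖ ≤ 2 := by
    calc ‖z ^ (N+1) - z‖ ≤ ‖z ^ (N+1)‖ + ‖z‖ :=
      norm_sub_le _ _
    _ = 2 := by rw [norm_pow, h1, one_pow]; norm_num
  gcongr

-- |e^{iθ} - 1| = 2 sin(θ/2) for θ ∈ [0, 2π]
lemma PV.abs_exp_sub_one {θ : ℝ} (h0 : 0 ≤ θ) (h2 : θ ≤ 2 * π) :
    ‖Complex.exp ((θ:ℂ) * Complex.I) - 1‖ = 2 * Real.sin (θ / 2) := by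
  have e : Complex.exp ((θ:ℂ) * Complex.I) - 1
      = ((Real.cos θ - 1 : ℝ) : ℂ) + ((Real.sin θ : ℝ) : ℂ) * Complex.I := by
    rw [Complex.exp_mul_I]
    push_cast
    ring
  rw [e, Complex.norm_def, Complex.normSq_add_mul_I]
  have hs : Real.sin (θ/2) ^ 2 = 1/2 - Real.cos θ / 2 := by
    have := Real.sin_sq_eq_half_sub (θ/2)
    rwa [show 2 * (θ/2) = θ by ring] at this
  have e2 : (Real.cos θ - 1)^2 + Real.sin θ ^ 2 = (2 * Real.sin (θ/2))^2 := by
    have hpyth := Real.sin_sq_add_cos_sq θ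
    nlinarith [hs]
  rw [e2]
  have hsin : 0 ≤ Real.sin (θ/2) :=
    Real.sin_nonneg_of_nonneg_of_le_pi (by linarith) (by linarith)
  exact Real.sqrt_sq (by linarith)

lemma PV.sin_lb {q : ℕ} {w : ℝ} (hq : (0:ℝ) < q) (hw : 0 < w) (h2 : 2 * w ≤ q) :
    2 * w / q ≤ Real.sin (π * w / q) := by
  have hple : π * w / q ≤ π / 2 := by
    rw [div_le_div_iff₀ hq (by norm_num : (0:ℝ) < 2)]
    nlinarith [Real.pi_pos]
  have := Real.mul_le_sin (x := π * w / q) (by positivity) hple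
  have e : 2 / π * (π * w / q) = 2 * w / q := by
    field_simp
  linarith [e ▸ this]

-- Jordan-type bound: 1/sin(π v/q) ≤ q/(2 min(v, q-v))
lemma PV.inv_sin_le {q v : ℕ} (h0 : 0 < v) (hvq : v < q) :
    1 / Real.sin (π * v / q) ≤ (q:ℝ) / (2 * (min v (q - v) : ℕ)) := by
  have hqpos : (0:ℝ) < q := by exact_mod_cast h0.trans hvq
  have hvr : (0:ℝ) < v := by exact_mod_cast h0
  have hvq' : (v:ℝ) < q := by exact_mod_cast hvq
  rcases le_or_gt (2 * v) q with hle | hlt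
  · have hmin : min v (q - v) = v := by omega
    rw [hmin]
    have hb := PV.sin_lb hqpos hvr (by exact_mod_cast hle)
    have h2v : (0:ℝ) < 2 * (v:ℝ) / q := by positivity
    have := one_div_le_one_div_of_le h2v hb
    calc 1 / Real.sin (π * v / q) ≤ 1 / (2 * (v:ℝ) / q) := this
    _ = (q:ℝ) / (2 * v) := by rw [one_div_div]
  · have hmin : min v (q - v) = q - v := by omega
    rw [hmin]
    have hqa : ((q - v : ℕ) : ℝ) = (q:ℝ) - v := by
      push_cast [Nat.cast_sub hvq.le]
      ring
    have hwpos : (0:ℝ) < (q:ℝ) - v := by linarith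
    have h2w : 2 * ((q:ℝ) - v) ≤ q := by
      have : (q:ℝ) < 2 * v := by exact_mod_cast hlt
      linarith
    have hsymm : Real.sin (π * v / q) = Real.sin (π * ((q:ℝ) - v) / q) := by
      rw [← Real.sin_pi_sub]
      congr 1
      field_simp
    have hb := PV.sin_lb hqpos hwpos h2w
    have h2v : (0:ℝ) < 2 * ((q:ℝ) - v) / q := by positivity
    rw [hsymm, hqa]
    calc 1 / Real.sin (π * ((q:ℝ) - v) / q) ≤ 1 / (2 * ((q:ℝ) - v) / q) :=
      one_div_le_one_div_of_le h2v hb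
    _ = (q:ℝ) / (2 * ((q:ℝ) - v)) := by rw [one_div_div]

section PVd
variable {q : ℕ} [NeZero q]



-- conj of stdAddChar
lemma PV.conj_std (x : ZMod q) :
    (starRingEnd ℂ) (ZMod.stdAddChar x) = ZMod.stdAddChar (-x) := by
  rw [ZMod.stdAddChar_apply, ZMod.stdAddChar_apply, ← Circle.coe_inv_eq_conj (ZMod.toCircle x)]
  congr 1
  rw [← AddChar.map_neg_eq_inv]

-- conj of χ
lemma PV.conj_char (χ : DirichletCharacter ℂ q) (a : ZMod q) :
    (starRingEnd ℂ) (χ a) = χ⁻¹ a := by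
  rw [MulChar.inv_apply_eq_inv]
  by_cases h : IsUnit a
  · have hn : ‖χ a‖ = 1 := by
      have := χ.unit_norm_eq_one h.unit
      rwa [IsUnit.unit_spec] at this
    rw [Ring.inverse_eq_inv', Complex.inv_def, Complex.normSq_eq_norm_sq, hn]
    simp
  · rw [χ.map_nonunit h, Ring.inverse_zero, map_zero]

lemma PV.char_mul_conj (χ : DirichletCharacter ℂ q) (a : ZMod q) :
    χ a * (starRingEnd ℂ) (χ a) = if IsUnit a then 1 else 0 := by
  by_cases h : IsUnit a
  · rw [if_pos h]
    have hn : ‖χ a‖ = 1 := by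
      have := χ.unit_norm_eq_one h.unit
      rwa [IsUnit.unit_spec] at this
    rw [Complex.mul_conj, Complex.normSq_eq_norm_sq, hn]
    norm_num
  · rw [if_neg h, χ.map_nonunit h, zero_mul]

lemma PV.gauss_norm_aux (χ : DirichletCharacter ℂ q)
    (hχ : χ.IsPrimitive) (ψ : AddChar (ZMod q) ℂ) (hψ : ψ.IsPrimitive)
    (hconj : ∀ x, (starRingEnd ℂ) (ψ x) = ψ (-x)) :
    ‖gaussSum χ ψ‖ = Real.sqrt q := by
  set τ : ℂ := gaussSum χ ψ with hτ
  have key : ∀ n : ZMod q, (∑ a, χ a * ψ (n * a)) = χ⁻¹ n * τ := by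
    intro n
    have := gaussSum_mulShift_of_isPrimitive ψ hχ n
    rw [← this]
    simp [gaussSum, AddChar.mulShift_apply]
  set C : ℂ := ∑ a : ZMod q, χ a * (starRingEnd ℂ) (χ a) with hC
  have expand : ∑ n : ZMod q, (∑ a, χ a * ψ (n * a)) * (starRingEnd ℂ) (∑ b, χ b * ψ (n * b))
      = (q : ℂ) * C := by
    have step1 : ∀ n : ZMod q,
        (∑ a, χ a * ψ (n * a)) * (starRingEnd ℂ) (∑ b, χ b * ψ (n * b))
        = ∑ a, ∑ b, (χ a * (starRingEnd ℂ) (χ b)) * ψ ((a - b) * n) := by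
      intro n
      rw [map_sum, Finset.sum_mul_sum]
      refine Finset.sum_congr rfl fun a _ => Finset.sum_congr rfl fun b _ => ?_
      rw [map_mul (starRingEnd ℂ), hconj]
      have h5 : ψ (n * a) * ψ (-(n * b)) = ψ ((a - b) * n) := by
        rw [← AddChar.map_add_eq_mul]
        congr 1
        ring
      calc χ a * ψ (n * a) * ((starRingEnd ℂ) (χ b) * ψ (-(n * b)))
          = (χ a * (starRingEnd ℂ) (χ b)) * (ψ (n * a) * ψ (-(n * b))) := by ring
        _ = _ := by rw [h5]
    calc ∑ n : ZMod q, (∑ a, χ a * ψ (n * a)) * (starRingEnd ℂ) (∑ b, χ b * ψ (n * b))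
        = ∑ n : ZMod q, ∑ a, ∑ b, (χ a * (starRingEnd ℂ) (χ b)) * ψ ((a - b) * n) := by
          exact Finset.sum_congr rfl fun n _ => step1 n
      _ = ∑ a, ∑ b, ∑ n : ZMod q, (χ a * (starRingEnd ℂ) (χ b)) * ψ ((a - b) * n) := by
          rw [Finset.sum_comm]
          refine Finset.sum_congr rfl fun a _ => Finset.sum_comm
      _ = ∑ a, ∑ b, (χ a * (starRingEnd ℂ) (χ b)) * ∑ n : ZMod q, ψ (n * (a - b)) := by
          refine Finset.sum_congr rfl fun a _ => Finset.sum_congr rfl fun b _ => ?_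
          rw [Finset.mul_sum]
          refine Finset.sum_congr rfl fun n _ => ?_
          rw [mul_comm (a - b) n]
      _ = ∑ a, ∑ b, (χ a * (starRingEnd ℂ) (χ b))
            * (((if a - b = 0 then Fintype.card (ZMod q) else 0 : ℕ) : ℂ)) := by
          refine Finset.sum_congr rfl fun a _ => Finset.sum_congr rfl fun b _ => ?_
          rw [AddChar.sum_mulShift (a - b) hψ]
      _ = ∑ a, (χ a * (starRingEnd ℂ) (χ a)) * (q : ℂ) := by
          refine Finset.sum_congr rfl fun a _ => ?_
          rw [Finset.sum_eq_single a]
          · simp [ZMod.card]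
          · intro b _ hb
            rw [if_neg (by simpa [sub_eq_zero] using (fun h => hb h.symm))]
            simp
          · intro h; exact absurd (Finset.mem_univ a) h
      _ = (q : ℂ) * C := by
          rw [hC, Finset.mul_sum]
          exact Finset.sum_congr rfl fun a _ => by ring
  have lhs : ∑ n : ZMod q, (∑ a, χ a * ψ (n * a)) * (starRingEnd ℂ) (∑ b, χ b * ψ (n * b))
      = C * (τ * (starRingEnd ℂ) τ) := by
    calc ∑ n : ZMod q, (∑ a, χ a * ψ (n * a)) * (starRingEnd ℂ) (∑ b, χ b * ψ (n * b))
        = ∑ n : ZMod q, (χ⁻¹ n * τ) * (starRingEnd ℂ) (χ⁻¹ n * τ) := by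
          refine Finset.sum_congr rfl fun n _ => ?_
          rw [key n]
      _ = ∑ n : ZMod q, (χ⁻¹ n * (starRingEnd ℂ) (χ⁻¹ n)) * (τ * (starRingEnd ℂ) τ) := by
          refine Finset.sum_congr rfl fun n _ => ?_
          rw [map_mul]; ring
      _ = (∑ n : ZMod q, χ⁻¹ n * (starRingEnd ℂ) (χ⁻¹ n)) * (τ * (starRingEnd ℂ) τ) := by
          rw [Finset.sum_mul]
      _ = C * (τ * (starRingEnd ℂ) τ) := by
          congr 1
          rw [hC]
          refine Finset.sum_congr rfl fun n _ => ?_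
          rw [PV.char_mul_conj χ⁻¹ n, PV.char_mul_conj χ n]
  have hCpos : C ≠ 0 := by
    rw [hC]
    have h6 : (∑ a : ZMod q, χ a * (starRingEnd ℂ) (χ a))
        = ∑ a : ZMod q, ((if IsUnit a then 1 else 0) : ℂ) :=
      Finset.sum_congr rfl fun a _ => PV.char_mul_conj χ a
    rw [h6, Finset.sum_boole]
    have hcard : 0 < (Finset.univ.filter (fun a : ZMod q => IsUnit a)).card := by
      rw [Finset.card_pos]
      exact ⟨1, by simp⟩
    exact_mod_cast Nat.cast_ne_zero.2 hcard.ne'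
  have hmain : τ * (starRingEnd ℂ) τ = (q : ℂ) := by
    have h7 := lhs.symm.trans expand
    have h8 : C * (τ * (starRingEnd ℂ) τ) = C * (q : ℂ) := by rw [h7]; ring
    exact mul_left_cancel₀ hCpos h8
  have habs : (‖τ‖) ^ 2 = q := by
    rw [Complex.mul_conj] at hmain
    have h3 : Complex.normSq τ = q := by exact_mod_cast hmain
    rw [Complex.sq_norm, h3]
  rw [← habs, Real.sqrt_sq (norm_nonneg τ)]

lemma PV.gauss_norm (χ : DirichletCharacter ℂ q) (hχ : χ.IsPrimitive) :
    ‖gaussSum χ ZMod.stdAddChar‖ = Real.sqrt q :=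
  PV.gauss_norm_aux χ hχ _ (ZMod.isPrimitive_stdAddChar q) PV.conj_std

end PVd


lemma PV.G_bound {q : ℕ} [NeZero q] (N : ℕ) {a : ZMod q} (ha : a ≠ 0) :
    ‖∑ n ∈ Finset.Icc 1 N, ZMod.stdAddChar ((n : ZMod q) * a)‖
      ≤ (q:ℝ) / (2 * (min a.val (q - a.val) : ℕ)) := by
  set v : ℕ := a.val with hv
  have hv0 : 0 < v := ZMod.val_pos.2 ha
  have hvq : v < q := ZMod.val_lt a
  have hq0 : (0:ℝ) < q := by exact_mod_cast hv0.trans hvq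
  have hvr : (0:ℝ) < v := by exact_mod_cast hv0
  have hvqr : (v:ℝ) < q := by exact_mod_cast hvq
  set θ : ℝ := 2 * π * v / q with hθ
  have hstd : ZMod.stdAddChar a = Complex.exp ((θ:ℂ) * Complex.I) := by
    have h1 : ((v:ℕ) : ZMod q) = a := ZMod.natCast_zmod_val a
    have h2 := ZMod.stdAddChar_coe (N := q) (v : ℤ)
    rw [show (((v:ℤ)) : ZMod q) = a by push_cast; exact h1] at h2
    rw [h2, hθ]
    congr 1
    push_cast
    ring
  have hzpow : ∀ n : ℕ, ZMod.stdAddChar ((n : ZMod q) * a)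
      = (Complex.exp ((θ:ℂ) * Complex.I)) ^ n := by
    intro n
    have h1 : (n : ZMod q) * a = (((n * v : ℕ)) : ZMod q) := by
      conv_lhs => rw [← ZMod.natCast_zmod_val a]
      push_cast
      ring
    rw [h1]
    have h2 := ZMod.stdAddChar_coe (N := q) ((n * v : ℕ) : ℤ)
    rw [show ((((n*v:ℕ):ℤ)) : ZMod q) = (((n*v:ℕ)) : ZMod q) by push_cast; ring] at h2
    rw [h2, ← Complex.exp_nat_mul, hθ]
    congr 1
    push_cast
    ring
  have hz1 : ‖Complex.exp ((θ:ℂ) * Complex.I)‖ = 1 :=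
    Complex.norm_exp_ofReal_mul_I θ
  have hzne : Complex.exp ((θ:ℂ) * Complex.I) ≠ 1 := by
    rw [← hstd]
    intro h
    apply ha
    have h0 : ZMod.stdAddChar a = ZMod.stdAddChar (0 : ZMod q) := by
      rw [h, AddChar.map_zero_eq_one]
    exact ZMod.injective_stdAddChar h0
  have hsum : ∑ n ∈ Finset.Icc 1 N, ZMod.stdAddChar ((n : ZMod q) * a)
      = ∑ n ∈ Finset.Icc 1 N, (Complex.exp ((θ:ℂ) * Complex.I)) ^ n :=
    Finset.sum_congr rfl fun n _ => hzpow n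
  rw [hsum]
  have hsin_pos : 0 < Real.sin (π * v / q) := by
    apply Real.sin_pos_of_pos_of_lt_pi
    · positivity
    · rw [div_lt_iff₀ hq0]
      nlinarith [Real.pi_pos]
  have habs : ‖Complex.exp ((θ:ℂ) * Complex.I) - 1‖
      = 2 * Real.sin (π * v / q) := by
    have h0 : 0 ≤ θ := by positivity
    have h2 : θ ≤ 2 * π := by
      rw [hθ, div_le_iff₀ hq0]
      nlinarith [Real.pi_pos]
    rw [PV.abs_exp_sub_one h0 h2]
    congr 1
    rw [hθ]
    ring
  calc ‖∑ n ∈ Finset.Icc 1 N, (Complex.exp ((θ:ℂ) * Complex.I)) ^ n‖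
      ≤ 2 / ‖Complex.exp ((θ:ℂ) * Complex.I) - 1‖ := PV.geom_bound N hzne hz1
    _ = 1 / Real.sin (π * v / q) := by
        rw [habs]
        rw [div_eq_div_iff (by positivity) (ne_of_gt hsin_pos)]
        ring
    _ ≤ (q:ℝ) / (2 * (min v (q - v) : ℕ)) := PV.inv_sin_le hv0 hvq


theorem polya_vinogradov (q : ℕ) (hq : 1 < q) (χ : DirichletCharacter ℂ q)
    (hχ : χ.IsPrimitive) (x : ℝ) :
    ‖∑ n ∈ Finset.Icc 1 ⌊x⌋₊, χ (n : ZMod q)‖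
      ≤ Real.sqrt q * Real.log q := by
  haveI : NeZero q := ⟨by omega⟩
  haveI : Fact (1 < q) := ⟨hq⟩
  set N : ℕ := ⌊x⌋₊ with hN
  set S : ℂ := ∑ n ∈ Finset.Icc 1 N, χ (n : ZMod q) with hS
  set τ : ℂ := gaussSum χ ZMod.stdAddChar with hτ
  -- Fourier expansion of each χ⁻¹ n
  have key : ∀ n : ZMod q, (∑ a : ZMod q, χ a * ZMod.stdAddChar (n * a)) = χ⁻¹ n * τ := by
    intro n
    have h := gaussSum_mulShift_of_isPrimitive ZMod.stdAddChar hχ n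
    rw [← h]
    simp [gaussSum, AddChar.mulShift_apply]
  have expand : (starRingEnd ℂ) S * τ
      = ∑ a : ZMod q, χ a * (∑ n ∈ Finset.Icc 1 N, ZMod.stdAddChar ((n : ZMod q) * a)) := by
    rw [hS, map_sum, Finset.sum_mul]
    calc ∑ n ∈ Finset.Icc 1 N, (starRingEnd ℂ) (χ (n : ZMod q)) * τ
        = ∑ n ∈ Finset.Icc 1 N, ∑ a : ZMod q, χ a * ZMod.stdAddChar ((n : ZMod q) * a) := by
          refine Finset.sum_congr rfl fun n _ => ?_
          rw [PV.conj_char, key ((n : ZMod q))]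
      _ = ∑ a : ZMod q, ∑ n ∈ Finset.Icc 1 N, χ a * ZMod.stdAddChar ((n : ZMod q) * a) :=
          Finset.sum_comm
      _ = _ := by
          refine Finset.sum_congr rfl fun a _ => ?_
          rw [Finset.mul_sum]
  -- absolute values
  have habs0 : ‖S‖ * Real.sqrt q = ‖(starRingEnd ℂ) S * τ‖ := by
    rw [norm_mul, Complex.norm_conj, hτ, PV.gauss_norm χ hχ]
  have hbound : ‖(starRingEnd ℂ) S * τ‖ ≤ (q:ℝ) * Real.log q := by
    rw [expand]
    have hzero : χ (0 : ZMod q) * (∑ n ∈ Finset.Icc 1 N, ZMod.stdAddChar ((n : ZMod q) * 0))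
        = 0 := by
      rw [MulChar.map_zero, zero_mul]
    have hsplit : ∑ a : ZMod q, χ a * (∑ n ∈ Finset.Icc 1 N, ZMod.stdAddChar ((n : ZMod q) * a))
        = ∑ a ∈ Finset.univ.erase (0 : ZMod q),
            χ a * (∑ n ∈ Finset.Icc 1 N, ZMod.stdAddChar ((n : ZMod q) * a)) := by
      rw [← Finset.sum_erase_add Finset.univ _ (Finset.mem_univ (0 : ZMod q)), hzero, add_zero]
    rw [hsplit]
    calc ‖∑ a ∈ Finset.univ.erase (0 : ZMod q),
            χ a * (∑ n ∈ Finset.Icc 1 N, ZMod.stdAddChar ((n : ZMod q) * a))‖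
        ≤ ∑ a ∈ Finset.univ.erase (0 : ZMod q),
            ‖χ a * (∑ n ∈ Finset.Icc 1 N, ZMod.stdAddChar ((n : ZMod q) * a))‖ :=
          norm_sum_le _ _
      _ ≤ ∑ a ∈ Finset.univ.erase (0 : ZMod q),
            (q:ℝ) / (2 * (min a.val (q - a.val) : ℕ)) := by
          refine Finset.sum_le_sum fun a haa => ?_
          have ha : a ≠ 0 := Finset.ne_of_mem_erase haa
          rw [norm_mul]
          calc ‖χ a‖
                * ‖∑ n ∈ Finset.Icc 1 N, ZMod.stdAddChar ((n : ZMod q) * a)‖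
              ≤ 1 * ((q:ℝ) / (2 * (min a.val (q - a.val) : ℕ))) := by
                refine mul_le_mul ?_ (PV.G_bound N ha) (norm_nonneg _) zero_le_one
                exact χ.norm_le_one a
            _ = _ := one_mul _
      _ = ∑ b ∈ Finset.Ioo 0 q, (q:ℝ) / (2 * (min b (q - b) : ℕ)) := by
          refine Finset.sum_nbij' (fun a => a.val) (fun b => (b : ZMod q)) ?_ ?_ ?_ ?_ ?_
          · intro a haa
            have ha : a ≠ 0 := Finset.ne_of_mem_erase haa
            simp only [Finset.mem_Ioo]
            exact ⟨ZMod.val_pos.2 ha, ZMod.val_lt a⟩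
          · intro b hb
            simp only [Finset.mem_Ioo] at hb
            apply Finset.mem_erase.2
            refine ⟨?_, Finset.mem_univ _⟩
            intro h0
            have h1 := ZMod.val_cast_of_lt (n := q) hb.2
            rw [h0, ZMod.val_zero] at h1
            omega
          · intro a _
            exact ZMod.natCast_zmod_val a
          · intro b hb
            simp only [Finset.mem_Ioo] at hb
            exact ZMod.val_cast_of_lt hb.2
          · intro a _
            rfl
      _ = (q:ℝ) / 2 * ∑ b ∈ Finset.Ioo 0 q, (1:ℝ) / (min b (q - b) : ℕ) := by
          rw [Finset.mul_sum]
          refine Finset.sum_congr rfl fun b _ => ?_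
          rw [div_mul_div_comm, mul_one]
      _ ≤ (q:ℝ) / 2 * (2 * Real.log q) := by
          refine mul_le_mul_of_nonneg_left (PV.sum_min_le hq) (by positivity)
      _ = (q:ℝ) * Real.log q := by ring
  -- conclude
  have hsq : (0:ℝ) < Real.sqrt q := Real.sqrt_pos.2 (by positivity)
  have hfinal : ‖S‖ * Real.sqrt q ≤ (Real.sqrt q * Real.log q) * Real.sqrt q := by
    rw [habs0]
    calc ‖(starRingEnd ℂ) S * τ‖ ≤ (q:ℝ) * Real.log q := hbound
    _ = (Real.sqrt q * Real.log q) * Real.sqrt q := by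
        rw [show (Real.sqrt q * Real.log q) * Real.sqrt q
            = (Real.sqrt q * Real.sqrt q) * Real.log q by ring,
          Real.mul_self_sqrt (by positivity)]
  exact le_of_mul_le_mul_right hfinal hsq

end PVaux
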